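/- arXiv:2102.08087 — 7 statements merged into one kernel-verified Lean document; each statement's English description precedes it below -/
import Mathlib

section
/- Let c* be the unique root of Φ(c) = λ·E[(r(X) − c·X)₊] − c. For any measurable subset 𝓔 ⊆ {x ∈ [0,C] : r(x) ≤ c*·x} of sub-profitable durations, define the modified reward r_𝓔(x) = r(x)·1(x ∉ 𝓔). Then c* is also the unique root of c ↦ λ·E[(r_𝓔(X) − c·X)₊] − c; in particular c* = λ·E[(r_𝓔(X) − c*·X)₊]. -/
open MeasureTheory Set
open scoped Classical

/-- removing any set of sub-profitable durations from the reward does not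
change the optimal profitability threshold `c*`. -/
theorem stmt1 {Ω : Type*} [MeasurableSpace Ω] (μ : Measure Ω) [IsProbabilityMeasure μ]
    (X : Ω → ℝ) (r : ℝ → ℝ) (C D E lam cstar : ℝ) (Eset : Set ℝ)
    (hXmeas : Measurable X)
    (hX : ∀ᵐ ω ∂μ, 0 ≤ X ω ∧ X ω ≤ C)
    (hrmeas : Measurable r)
    (hr : ∀ x, E ≤ r x ∧ r x ≤ D) (hE : E ≤ 0) (hD : 0 ≤ D) (hlam : 0 < lam)
    (hEmeas : MeasurableSet Eset)
    (hEsub : Eset ⊆ {x | x ∈ Set.Icc 0 C ∧ r x ≤ cstar * x})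
    (hint : ∀ c : ℝ, Integrable (fun ω => max (r (X ω) - c * X ω) 0) μ)
    (hintE : ∀ c : ℝ,
      Integrable (fun ω => max ((if X ω ∈ Eset then 0 else r (X ω)) - c * X ω) 0) μ)
    (hcstar0 : 0 ≤ cstar)
    (hroot : lam * ∫ ω, max (r (X ω) - cstar * X ω) 0 ∂μ - cstar = 0)
    (huniq : ∀ c : ℝ, 0 ≤ c →
      lam * ∫ ω, max (r (X ω) - c * X ω) 0 ∂μ - c = 0 → c = cstar) :
    (cstar = lam * ∫ ω, max ((if X ω ∈ Eset then 0 else r (X ω)) - cstar * X ω) 0 ∂μ) ∧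
    (∀ c : ℝ, 0 ≤ c →
      (lam * ∫ ω, max ((if X ω ∈ Eset then 0 else r (X ω)) - c * X ω) 0 ∂μ - c = 0
        ↔ c = cstar)) := by
  -- integrands at cstar agree pointwise
  have hpt : ∀ ω, max ((if X ω ∈ Eset then 0 else r (X ω)) - cstar * X ω) 0
      = max (r (X ω) - cstar * X ω) 0 := by
    intro ω
    by_cases h : X ω ∈ Eset
    · have h2 := hEsub h
      have hx0 : (0:ℝ) ≤ X ω := h2.1.1
      have hr2 : r (X ω) ≤ cstar * X ω := h2.2
      have hcx : 0 ≤ cstar * X ω := mul_nonneg hcstar0 hx0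
      simp only [h, if_true]
      rw [max_eq_right (by linarith), max_eq_right (by linarith)]
    · simp [h]
  have hIeq : (∫ ω, max ((if X ω ∈ Eset then 0 else r (X ω)) - cstar * X ω) 0 ∂μ)
      = ∫ ω, max (r (X ω) - cstar * X ω) 0 ∂μ := by
    exact integral_congr_ae (Filter.Eventually.of_forall hpt)
  -- monotonicity of the modified integral in c
  have hmono : ∀ a b : ℝ, a ≤ b →
      (∫ ω, max ((if X ω ∈ Eset then 0 else r (X ω)) - b * X ω) 0 ∂μ)
      ≤ ∫ ω, max ((if X ω ∈ Eset then 0 else r (X ω)) - a * X ω) 0 ∂μ := by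
    intro a b hab
    refine integral_mono_ae (hintE b) (hintE a) ?_
    filter_upwards [hX] with ω hω
    have := mul_le_mul_of_nonneg_right hab hω.1
    exact max_le_max (by linarith) le_rfl
  refine ⟨by rw [hIeq]; linarith, fun c hc => ⟨fun hcr => ?_, fun h => by
    rw [h, hIeq]; linarith⟩⟩
  by_contra hne
  have hcst : lam * ∫ ω, max ((if X ω ∈ Eset then 0 else r (X ω)) - cstar * X ω) 0 ∂μ
      - cstar = 0 := by rw [hIeq]; linarith
  rcases lt_or_gt_of_ne hne with h | h
  · have h1 := hmono c cstar h.le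
    have h2 := mul_le_mul_of_nonneg_left h1 hlam.le
    linarith
  · have h1 := hmono cstar c h.le
    have h2 := mul_le_mul_of_nonneg_left h1 hlam.le
    linarith
end

section
/- Let X₁,…,Xₙ be i.i.d. copies of X with 0 ≤ X ≤ C, r : [0,C] → [E,D], λ > 0. Let Φₙ(c) = (λ/n)·Σᵢ (r(Xᵢ) − c·Xᵢ)₊ − c and let cₙ be its unique root; let c* be the unique root of Φ(c) = λ·E[(r(X) − c·X)₊] − c. Then for every δ ∈ (0,1], P( cₙ − c* > λ(D−E)·√(ln(1/δ)/(2n)) ) ≤ δ. -/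
open MeasureTheory ProbabilityTheory Set

lemma logIneq (p : ℝ) (hp0 : 0 ≤ p) (hp1 : p ≤ 1) (u : ℝ) :
    Real.log (1 - p + p * Real.exp u) ≤ p * u + u ^ 2 / 8 := by
  rcases eq_or_lt_of_le hp0 with h0 | hp0'
  · simp [← h0]; positivity
  rcases eq_or_lt_of_le hp1 with h1 | hp1'
  · subst h1; simp [Real.log_exp]; positivity
  have hd : ∀ v : ℝ, 0 < 1 - p + p * Real.exp v := by
    intro v; have := Real.exp_pos v; nlinarith
  set φ : ℝ → ℝ := fun v => p * v + v ^ 2 / 8 - Real.log (1 - p + p * Real.exp v) with hφ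
  set φ' : ℝ → ℝ := fun v => p + v / 4 - p * Real.exp v / (1 - p + p * Real.exp v) with hφ'
  have hden : ∀ v : ℝ, HasDerivAt (fun w => 1 - p + p * Real.exp w) (p * Real.exp v) v := by
    intro v
    simpa using ((Real.hasDerivAt_exp v).const_mul p).const_add (1 - p)
  have hd1 : ∀ v : ℝ, HasDerivAt φ (φ' v) v := by
    intro v
    have h2 := (hden v).log (hd v).ne'
    have h3 : HasDerivAt (fun w : ℝ => p * w + w ^ 2 / 8) (p + v / 4) v := by
      have := ((hasDerivAt_pow 2 v).div_const 8).const_add (0:ℝ)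
      have h4 := ((hasDerivAt_id v).const_mul p).add ((hasDerivAt_pow 2 v).div_const 8)
      convert h4 using 1
      · rfl
      · rfl
      · rfl
      push_cast; ring
    exact h3.sub h2
  have hd2 : ∀ v : ℝ, HasDerivAt φ'
      (1 / 4 - p * (1 - p) * Real.exp v / (1 - p + p * Real.exp v) ^ 2) v := by
    intro v
    have hq : HasDerivAt (fun w => p * Real.exp w / (1 - p + p * Real.exp w))
        ((p * Real.exp v * (1 - p + p * Real.exp v) - p * Real.exp v * (p * Real.exp v)) /
          (1 - p + p * Real.exp v) ^ 2) v :=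
      ((Real.hasDerivAt_exp v).const_mul p).div (hden v) (hd v).ne'
    have h3 : HasDerivAt (fun w : ℝ => p + w / 4) (1 / 4) v := by
      simpa using ((hasDerivAt_id v).div_const 4).const_add p
    have := h3.sub hq
    convert this using 1
    · rfl
    · rfl
    · rfl
    have hne : (1 - p + p * Real.exp v) ≠ 0 := (hd v).ne'
    field_simp
    ring
  have hmono : Monotone φ' := by
    apply monotone_of_deriv_nonneg (fun v => (hd2 v).differentiableAt)
    intro v
    rw [(hd2 v).deriv, sub_nonneg, div_le_iff₀ (pow_pos (hd v) 2)]
    nlinarith [sq_nonneg (1 - p - p * Real.exp v), Real.exp_pos v]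
  have hφ'0 : φ' 0 = 0 := by simp [hφ']
  have hφ0 : φ 0 = 0 := by simp [hφ]
  have hcont : Continuous φ := by
    exact Differentiable.continuous (fun v => (hd1 v).differentiableAt)
  have hkey : 0 ≤ φ u := by
    rcases le_total 0 u with hu | hu
    · have hmonoOn : MonotoneOn φ (Set.Ici 0) := by
        apply monotoneOn_of_deriv_nonneg (convex_Ici 0) hcont.continuousOn
          (fun x _ => (hd1 x).differentiableAt.differentiableWithinAt)
        intro x hx
        rw [interior_Ici] at hx
        rw [(hd1 x).deriv]
        rw [← hφ'0]
        exact hmono (le_of_lt hx)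
      have := hmonoOn (Set.self_mem_Ici) (Set.mem_Ici.mpr hu) hu
      linarith [hφ0]
    · have hantiOn : AntitoneOn φ (Set.Iic 0) := by
        apply antitoneOn_of_deriv_nonpos (convex_Iic 0) hcont.continuousOn
          (fun x _ => (hd1 x).differentiableAt.differentiableWithinAt)
        intro x hx
        rw [interior_Iic] at hx
        rw [(hd1 x).deriv, ← hφ'0]
        exact hmono (le_of_lt hx)
      have := hantiOn (Set.mem_Iic.mpr hu) (Set.self_mem_Iic) hu
      linarith [hφ0]
    
  simp only [hφ] at hkey
  linarith

lemma hoeffding_lemma {Ω : Type*} [MeasurableSpace Ω] (μ : Measure Ω) [IsProbabilityMeasure μ]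
    (Y : Ω → ℝ) (hY : AEMeasurable Y μ) (a b s : ℝ) (hab : a < b)
    (hbd : ∀ᵐ ω ∂μ, Y ω ∈ Set.Icc a b) (hmean : ∫ ω, Y ω ∂μ = 0) :
    ∫ ω, Real.exp (s * Y ω) ∂μ ≤ Real.exp (s ^ 2 * (b - a) ^ 2 / 8) := by
  have hba : (0:ℝ) < b - a := by linarith
  have hYint : Integrable Y μ := by
    apply Integrable.mono' (integrable_const (|a| + |b|)) hY.aestronglyMeasurable
    filter_upwards [hbd] with ω h
    rw [Real.norm_eq_abs, abs_le]
    constructor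
    · have := neg_abs_le a; have := abs_nonneg b; linarith [h.1]
    · have := le_abs_self b; have := abs_nonneg a; linarith [h.2]
  have ha0 : a ≤ 0 := by
    have h := integral_mono_ae (integrable_const a) hYint
      (by filter_upwards [hbd] with ω h using h.1)
    simpa [hmean] using h
  have hb0 : 0 ≤ b := by
    have h := integral_mono_ae hYint (integrable_const b)
      (by filter_upwards [hbd] with ω h using h.2)
    simpa [hmean] using h
  set p : ℝ := -a / (b - a) with hp
  have hp0 : 0 ≤ p := div_nonneg (by linarith) hba.le
  have hp1 : p ≤ 1 := by rw [div_le_one hba]; linarith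
  set u : ℝ := s * (b - a) with hu
  set A : ℝ := b / (b - a) * Real.exp (s * a) - a / (b - a) * Real.exp (s * b) with hA
  set Bc : ℝ := (Real.exp (s * b) - Real.exp (s * a)) / (b - a) with hBc
  have hEmeas : AEStronglyMeasurable (fun ω => Real.exp (s * Y ω)) μ :=
    (Real.measurable_exp.comp_aemeasurable (hY.const_mul s)).aestronglyMeasurable
  have hEint : Integrable (fun ω => Real.exp (s * Y ω)) μ := by
    apply Integrable.mono' (integrable_const (Real.exp (|s| * (|a| + |b|)))) hEmeas
    filter_upwards [hbd] with ω h
    rw [Real.norm_eq_abs, abs_of_pos (Real.exp_pos _)]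
    apply Real.exp_le_exp.mpr
    have h1 : |Y ω| ≤ |a| + |b| := by
      rw [abs_le]
      constructor
      · have := neg_abs_le a; have := abs_nonneg b; linarith [h.1]
      · have := le_abs_self b; have := abs_nonneg a; linarith [h.2]
    calc s * Y ω ≤ |s * Y ω| := le_abs_self _
      _ = |s| * |Y ω| := abs_mul _ _
      _ ≤ |s| * (|a| + |b|) := by
          exact mul_le_mul_of_nonneg_left h1 (abs_nonneg s)
  have hptwise : ∀ᵐ ω ∂μ, Real.exp (s * Y ω) ≤ A + Bc * Y ω := by
    filter_upwards [hbd] with ω h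
    have w1 : (0:ℝ) ≤ (b - Y ω) / (b - a) := div_nonneg (by linarith [h.2]) hba.le
    have w2 : (0:ℝ) ≤ (Y ω - a) / (b - a) := div_nonneg (by linarith [h.1]) hba.le
    have hsum : (b - Y ω) / (b - a) + (Y ω - a) / (b - a) = 1 := by field_simp; ring
    have h2 := convexOn_exp.2 (Set.mem_univ (s * a)) (Set.mem_univ (s * b)) w1 w2 hsum
    simp only [smul_eq_mul] at h2
    have harg : (b - Y ω) / (b - a) * (s * a) + (Y ω - a) / (b - a) * (s * b) = s * Y ω := by
      field_simp; ring
    rw [harg] at h2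
    calc Real.exp (s * Y ω) ≤ (b - Y ω) / (b - a) * Real.exp (s * a)
          + (Y ω - a) / (b - a) * Real.exp (s * b) := h2
      _ = A + Bc * Y ω := by rw [hA, hBc]; field_simp; ring
  have hbound : ∫ ω, Real.exp (s * Y ω) ∂μ ≤ A := by
    have hint2 : Integrable (fun ω => A + Bc * Y ω) μ :=
      (integrable_const A).add (hYint.const_mul Bc)
    have := integral_mono_ae hEint hint2 hptwise
    rwa [integral_add (integrable_const A) (hYint.const_mul Bc), integral_const,
      integral_const_mul, hmean, mul_zero, add_zero, measureReal_def, measure_univ, ENNReal.toReal_one,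
      one_smul] at this
  refine hbound.trans ?_
  have hexpb : Real.exp (s * b) = Real.exp (s * a) * Real.exp u := by
    rw [← Real.exp_add]; congr 1; rw [hu]; ring
  have hAeq : A = Real.exp (s * a) * (1 - p + p * Real.exp u) := by
    rw [hA, hexpb, hp]; field_simp; ring
  have hdpos : 0 < 1 - p + p * Real.exp u := by
    rcases eq_or_lt_of_le hp1 with h1 | h1
    · rw [h1]; simpa using Real.exp_pos u
    · have := Real.exp_pos u; nlinarith
  have hlog := logIneq p hp0 hp1 u
  have h3 : 1 - p + p * Real.exp u ≤ Real.exp (p * u + u ^ 2 / 8) := by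
    calc 1 - p + p * Real.exp u = Real.exp (Real.log (1 - p + p * Real.exp u)) :=
        (Real.exp_log hdpos).symm
      _ ≤ _ := Real.exp_le_exp.mpr hlog
  have hzero : s * a + p * u = 0 := by rw [hp, hu]; field_simp; ring
  calc A = Real.exp (s * a) * (1 - p + p * Real.exp u) := hAeq
    _ ≤ Real.exp (s * a) * Real.exp (p * u + u ^ 2 / 8) :=
        mul_le_mul_of_nonneg_left h3 (Real.exp_pos _).le
    _ = Real.exp (s * a + (p * u + u ^ 2 / 8)) := (Real.exp_add _ _).symm
    _ = Real.exp (u ^ 2 / 8) := by rw [← add_assoc, hzero, zero_add]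
    _ = Real.exp (s ^ 2 * (b - a) ^ 2 / 8) := by rw [hu]; ring_nf

lemma hoeffding_ineq {Ω : Type*} [MeasurableSpace Ω] (μ : Measure Ω) [IsProbabilityMeasure μ]
    (n : ℕ) (Y : Fin n → Ω → ℝ) (hmeasY : ∀ i, Measurable (Y i))
    (hindepY : iIndepFun Y μ) (B m t : ℝ) (hB : 0 < B) (ht : 0 < t)
    (hbd : ∀ i, ∀ᵐ ω ∂μ, Y i ω ∈ Set.Icc 0 B) (hm : ∀ i, ∫ ω, Y i ω ∂μ = m) :
    μ {ω | n * m + n * t ≤ ∑ i, Y i ω} ≤ ENNReal.ofReal (Real.exp (-2 * n * t ^ 2 / B ^ 2)) := by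
  set s : ℝ := 4 * t / B ^ 2 with hsdef
  have hs : 0 < s := by positivity
  have hYiint : ∀ i, Integrable (fun ω => Real.exp (s * Y i ω)) μ := by
    intro i
    apply Integrable.mono' (integrable_const (Real.exp (s * B)))
      ((Real.measurable_exp.comp ((hmeasY i).const_mul s)).aestronglyMeasurable)
    filter_upwards [hbd i] with ω h
    simp only [Function.comp_apply, Real.norm_eq_abs, abs_of_pos (Real.exp_pos _)]
    exact Real.exp_le_exp.mpr (mul_le_mul_of_nonneg_left h.2 hs.le)
  have hSint : Integrable (fun ω => Real.exp (s * (∑ i, Y i) ω)) μ :=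
    ProbabilityTheory.iIndepFun.integrable_exp_mul_sum hindepY hmeasY
      (fun i _ => hYiint i)
  have hch := measure_ge_le_exp_mul_mgf (X := ∑ i, Y i) (μ := μ) (t := s)
      (↑n * m + ↑n * t) hs.le hSint
  rw [hindepY.mgf_sum hmeasY] at hch
  have hmgf_i : ∀ i, mgf (Y i) μ s ≤ Real.exp (s * m + s ^ 2 * B ^ 2 / 8) := by
    intro i
    have hYint : Integrable (Y i) μ := by
      apply Integrable.mono' (integrable_const B) (hmeasY i).aestronglyMeasurable
      filter_upwards [hbd i] with ω h
      rw [Real.norm_eq_abs, abs_le]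
      exact ⟨by linarith [h.1, hB], h.2⟩
    have hmean0 : ∫ ω, (Y i ω - m) ∂μ = 0 := by
      rw [integral_sub hYint (integrable_const m), hm i, integral_const, measureReal_def, measure_univ,
        ENNReal.toReal_one, one_smul, sub_self]
    have hZ := hoeffding_lemma μ (fun ω => Y i ω - m) ((hmeasY i).aemeasurable.sub
      aemeasurable_const) (-m) (B - m) s (by linarith) ?_ hmean0
    · have hBB : (B - m - -m) = B := by ring
      rw [hBB] at hZ
      calc mgf (Y i) μ s = ∫ ω, Real.exp (s * Y i ω) ∂μ := rfl
        _ = Real.exp (s * m) * ∫ ω, Real.exp (s * (Y i ω - m)) ∂μ := by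
            rw [← integral_const_mul]
            congr 1; ext ω; rw [← Real.exp_add]; congr 1; ring
        _ ≤ Real.exp (s * m) * Real.exp (s ^ 2 * B ^ 2 / 8) :=
            mul_le_mul_of_nonneg_left hZ (Real.exp_pos _).le
        _ = Real.exp (s * m + s ^ 2 * B ^ 2 / 8) := (Real.exp_add _ _).symm
    · filter_upwards [hbd i] with ω h
      exact ⟨by simp; linarith [h.1], by simp; linarith [h.2]⟩
  have hprod : ∏ i, mgf (Y i) μ s ≤ Real.exp ((n : ℝ) * (s * m + s ^ 2 * B ^ 2 / 8)) := by
    calc ∏ i : Fin n, mgf (Y i) μ s ≤ ∏ _i : Fin n, Real.exp (s * m + s ^ 2 * B ^ 2 / 8) :=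
        Finset.prod_le_prod (fun i _ => mgf_nonneg) (fun i _ => hmgf_i i)
      _ = Real.exp ((n : ℝ) * (s * m + s ^ 2 * B ^ 2 / 8)) := by
        rw [Finset.prod_const, ← Real.exp_nat_mul]; simp
  have hfinal : Real.exp (-s * (↑n * m + ↑n * t)) * Real.exp ((n : ℝ) * (s * m + s ^ 2 * B ^ 2 / 8))
      = Real.exp (-2 * n * t ^ 2 / B ^ 2) := by
    rw [← Real.exp_add]
    congr 1
    rw [hsdef]
    field_simp
    ring
  have hle : (μ {ω | ↑n * m + ↑n * t ≤ ∑ i, Y i ω}).toReal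
      ≤ Real.exp (-2 * n * t ^ 2 / B ^ 2) := by
    have hseteq : {ω | ↑n * m + ↑n * t ≤ ∑ i, Y i ω} = {ω | ↑n * m + ↑n * t ≤ (∑ i, Y i) ω} := by
      ext ω; simp [Finset.sum_apply]
    rw [hseteq]
    calc (μ {ω | ↑n * m + ↑n * t ≤ (∑ i, Y i) ω}).toReal
        ≤ Real.exp (-s * (↑n * m + ↑n * t)) * ∏ i, mgf (Y i) μ s := hch
      _ ≤ Real.exp (-s * (↑n * m + ↑n * t)) * Real.exp ((n : ℝ) * (s * m + s ^ 2 * B ^ 2 / 8)) :=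
          mul_le_mul_of_nonneg_left hprod (Real.exp_pos _).le
      _ = Real.exp (-2 * n * t ^ 2 / B ^ 2) := hfinal
  rw [← ENNReal.ofReal_toReal (measure_ne_top μ _)]
  exact ENNReal.ofReal_le_ofReal hle

/-- deviation bound for the empirical profitability threshold `cₙ`. -/
theorem stmt3 {Ω : Type*} [MeasurableSpace Ω] (μ : Measure Ω) [IsProbabilityMeasure μ]
    (ν : Measure ℝ) [IsProbabilityMeasure ν]
    (n : ℕ) (hn : 0 < n) (Xs : Fin n → Ω → ℝ)
    (r : ℝ → ℝ) (C D E lam cstar δ : ℝ) (cn : Ω → ℝ)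
    (hmeas : ∀ i, Measurable (Xs i))
    (hindep : iIndepFun Xs μ)
    (hdist : ∀ i, Measure.map (Xs i) μ = ν)
    (hsupp : ∀ᵐ x ∂ν, 0 ≤ x ∧ x ≤ C)
    (hrmeas : Measurable r)
    (hr : ∀ x, E ≤ r x ∧ r x ≤ D) (hE : E ≤ 0) (hD : 0 ≤ D) (hlam : 0 < lam)
    (hint : ∀ c : ℝ, Integrable (fun x => max (r x - c * x) 0) ν)
    (hδ : δ ∈ Set.Ioc (0:ℝ) 1)
    (hcstar0 : 0 ≤ cstar)
    (hroot : lam * ∫ x, max (r x - cstar * x) 0 ∂ν - cstar = 0)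
    (hcnmeas : Measurable cn)
    (hcn : ∀ ω, (lam / n) * ∑ i : Fin n, max (r (Xs i ω) - cn ω * Xs i ω) 0 - cn ω = 0) :
    μ {ω | lam * (D - E) * Real.sqrt (Real.log (1/δ) / (2 * n)) < cn ω - cstar}
      ≤ ENNReal.ofReal δ := by
  obtain ⟨hδ0, hδ1⟩ := hδ
  have hnpos : (0:ℝ) < n := Nat.cast_pos.mpr hn
  -- a.e. all coordinates are in [0, C]
  have hgood : ∀ᵐ ω ∂μ, ∀ i, 0 ≤ Xs i ω ∧ Xs i ω ≤ C := by
    rw [MeasureTheory.ae_all_iff]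
    intro i
    have h1 : ∀ᵐ x ∂(Measure.map (Xs i) μ), 0 ≤ x ∧ x ≤ C := by rw [hdist i]; exact hsupp
    exact (MeasureTheory.ae_map_iff (hmeas i).aemeasurable
      ((measurableSet_le measurable_const measurable_id).inter
        (measurableSet_le measurable_id measurable_const))).mp h1
  -- trivial case δ = 1
  rcases eq_or_lt_of_le hδ1 with hδeq | hδlt
  · calc μ _ ≤ 1 := prob_le_one
      _ = ENNReal.ofReal δ := by rw [hδeq, ENNReal.ofReal_one]
  -- case D - E = 0
  rcases eq_or_lt_of_le (by linarith : (0:ℝ) ≤ D - E) with hDE0 | hDE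
  · have hD0 : D = 0 := by linarith
    have hE0 : E = 0 := by linarith
    have hr0 : ∀ x, r x = 0 := fun x =>
      le_antisymm (by rw [← hD0]; exact (hr x).2) (by rw [← hE0]; exact (hr x).1)
    have h0 : μ {ω | lam * (D - E) * Real.sqrt (Real.log (1/δ) / (2 * n)) < cn ω - cstar}
        ≤ μ (∅ : Set Ω) := by
      apply measure_mono_ae
      filter_upwards [hgood] with ω hg hmem
      exfalso
      have hmem' : (0:ℝ) < cn ω - cstar := by
        have h2 : lam * (D - E) * Real.sqrt (Real.log (1/δ) / (2 * ↑n)) < cn ω - cstar := hmem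
        rw [← hDE0, mul_zero, zero_mul] at h2
        exact h2
      have hcnpos : 0 < cn ω := by linarith
      have hsum0 : ∑ i : Fin n, max (r (Xs i ω) - cn ω * Xs i ω) 0 = 0 := by
        apply Finset.sum_eq_zero
        intro i _
        rw [hr0, zero_sub, max_eq_right]
        exact neg_nonpos_of_nonneg (mul_nonneg hcnpos.le (hg i).1)
      have := hcn ω
      rw [hsum0, mul_zero, zero_sub, neg_eq_zero] at this
      linarith
    calc μ _ ≤ μ (∅ : Set Ω) := h0
      _ = 0 := measure_empty
      _ ≤ _ := zero_le
  -- main case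
  set t : ℝ := (D - E) * Real.sqrt (Real.log (1/δ) / (2 * n)) with htdef
  have hL : 0 < Real.log (1/δ) := Real.log_pos (one_lt_one_div hδ0 hδlt)
  have ht : 0 < t := by
    apply mul_pos hDE
    exact Real.sqrt_pos.mpr (div_pos hL (by positivity))
  set ε : ℝ := lam * t with hεdef
  have hε : 0 < ε := mul_pos hlam ht
  set c : ℝ := cstar + ε with hcdef
  have hc0 : 0 ≤ c := by linarith
  set f : ℝ → ℝ := fun x => max (r x - c * x) 0 with hfdef
  have hf : Measurable f := (hrmeas.sub (measurable_id.const_mul c)).max measurable_const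
  set Y : Fin n → Ω → ℝ := fun i => f ∘ Xs i with hYdef
  have hYmeas : ∀ i, Measurable (Y i) := fun i => hf.comp (hmeas i)
  have hYindep : iIndepFun Y μ := hindep.comp (fun _ => f) fun _ => hf
  set m : ℝ := ∫ x, f x ∂ν with hmdef
  have hmi : ∀ i, ∫ ω, Y i ω ∂μ = m := by
    intro i
    have h1 : ∫ x, f x ∂(Measure.map (Xs i) μ) = ∫ ω, f (Xs i ω) ∂μ :=
      integral_map (hmeas i).aemeasurable hf.aestronglyMeasurable
    rw [hdist i] at h1
    exact h1.symm
  have hbd : ∀ i, ∀ᵐ ω ∂μ, Y i ω ∈ Set.Icc 0 (D - E) := by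
    intro i
    filter_upwards [hgood] with ω hg
    constructor
    · exact le_max_right _ _
    · apply max_le _ (by linarith)
      have h1 := (hr (Xs i ω)).2
      have h2 : 0 ≤ c * Xs i ω := mul_nonneg hc0 (hg i).1
      linarith
  -- key: lam * m ≤ cstar
  have hm_le : m ≤ ∫ x, max (r x - cstar * x) 0 ∂ν := by
    apply integral_mono_ae (hint c) (hint cstar)
    filter_upwards [hsupp] with x hx
    apply max_le_max _ le_rfl
    have : cstar * x ≤ c * x := mul_le_mul_of_nonneg_right (by linarith) hx.1
    linarith
  have hlm : lam * m ≤ cstar := by nlinarith [hroot]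
  -- event inclusion
  have hincl : ∀ᵐ ω ∂μ, ω ∈ {ω | lam * (D - E) * Real.sqrt (Real.log (1/δ) / (2 * n))
      < cn ω - cstar} → ω ∈ {ω | ↑n * m + ↑n * t ≤ ∑ i, Y i ω} := by
    filter_upwards [hgood] with ω hg hev
    show (n:ℝ) * m + ↑n * t ≤ ∑ i, Y i ω
    have hev2 : lam * (D - E) * Real.sqrt (Real.log (1/δ) / (2 * n)) < cn ω - cstar := hev
    have hev' : c < cn ω := by
      have heq : lam * (D - E) * Real.sqrt (Real.log (1/δ) / (2 * n)) = ε := by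
        rw [hεdef, htdef]; ring
      rw [heq] at hev2
      rw [hcdef]; linarith
    have hterm : ∑ i : Fin n, max (r (Xs i ω) - cn ω * Xs i ω) 0 ≤ ∑ i, Y i ω := by
      apply Finset.sum_le_sum
      intro i _
      apply max_le_max _ le_rfl
      have : c * Xs i ω ≤ cn ω * Xs i ω := mul_le_mul_of_nonneg_right hev'.le (hg i).1
      linarith
    have e1 : (n:ℝ) * cn ω = lam * ∑ i : Fin n, max (r (Xs i ω) - cn ω * Xs i ω) 0 := by
      have h0 : lam / ↑n * ∑ i : Fin n, max (r (Xs i ω) - cn ω * Xs i ω) 0 = cn ω := by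
        linarith [hcn ω]
      calc (n:ℝ) * cn ω
          = ↑n * (lam / ↑n * ∑ i : Fin n, max (r (Xs i ω) - cn ω * Xs i ω) 0) := by rw [h0]
        _ = lam * ∑ i : Fin n, max (r (Xs i ω) - cn ω * Xs i ω) 0 := by
            field_simp
    have e2 : (n:ℝ) * cn ω ≤ lam * ∑ i, Y i ω := by
      rw [e1]; exact mul_le_mul_of_nonneg_left hterm hlam.le
    have e3 : lam * ((n:ℝ) * m + ↑n * t) < lam * ∑ i, Y i ω := by
      have h4 : lam * m + lam * t ≤ cstar + ε := by rw [hεdef]; linarith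
      have h5 : (n:ℝ) * (lam * m + lam * t) < n * cn ω := by
        apply mul_lt_mul_of_pos_left _ hnpos
        calc lam * m + lam * t ≤ cstar + ε := h4
          _ = c := by rw [hcdef]
          _ < cn ω := hev'
      nlinarith [e2]
    have := (mul_lt_mul_iff_right₀ hlam).mp e3
    linarith
  have hmain := hoeffding_ineq μ n Y hYmeas hYindep (D - E) m t hDE ht hbd hmi
  have hexp : Real.exp (-2 * n * t ^ 2 / (D - E) ^ 2) = δ := by
    have ht2 : t ^ 2 = (D - E) ^ 2 * (Real.log (1/δ) / (2 * n)) := by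
      rw [htdef, mul_pow, Real.sq_sqrt (by positivity)]
    have harg : -2 * n * t ^ 2 / (D - E) ^ 2 = -Real.log (1/δ) := by
      rw [ht2]; field_simp
    rw [harg, one_div, Real.log_inv, neg_neg, Real.exp_log hδ0]
  calc μ {ω | lam * (D - E) * Real.sqrt (Real.log (1/δ) / (2 * n)) < cn ω - cstar}
      ≤ μ {ω | ↑n * m + ↑n * t ≤ ∑ i, Y i ω} := measure_mono_ae hincl
    _ ≤ ENNReal.ofReal (Real.exp (-2 * n * t ^ 2 / (D - E) ^ 2)) := hmain
    _ = ENNReal.ofReal δ := by rw [hexp]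
end

section
/- For any c ≥ 0 and ε > 0, the function Φ(c) = λ·E[(r(X) − c·X)₊] − c satisfies Φ(c* + ε) ≤ −ε, where c* is the unique root of Φ. More precisely, Φ(c*+ε) ≤ −ε·(1 + λ·q_ε) where q_ε = E[X·1(r(X) ≥ (c*+ε)·X)]. -/
open MeasureTheory Set

/-- `Φ(c*+ε) ≤ −ε·(1 + λ·q_ε) ≤ −ε`, where `q_ε = E[X·1(r(X) ≥ (c*+ε)X)]`. -/
theorem stmt4 {Ω : Type*} [MeasurableSpace Ω] (μ : Measure Ω) [IsProbabilityMeasure μ]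
    (X : Ω → ℝ) (r : ℝ → ℝ) (C D E lam cstar ε : ℝ)
    (hXmeas : Measurable X)
    (hX : ∀ᵐ ω ∂μ, 0 ≤ X ω ∧ X ω ≤ C)
    (hrmeas : Measurable r)
    (hr : ∀ x, E ≤ r x ∧ r x ≤ D) (hlam : 0 < lam) (hε : 0 < ε)
    (hint : ∀ c : ℝ, Integrable (fun ω => max (r (X ω) - c * X ω) 0) μ)
    (hintq : Integrable (fun ω => if (cstar + ε) * X ω ≤ r (X ω) then X ω else 0) μ)
    (hcstar0 : 0 ≤ cstar)
    (hroot : lam * ∫ ω, max (r (X ω) - cstar * X ω) 0 ∂μ - cstar = 0) :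
    lam * ∫ ω, max (r (X ω) - (cstar + ε) * X ω) 0 ∂μ - (cstar + ε)
      ≤ -ε * (1 + lam * ∫ ω, (if (cstar + ε) * X ω ≤ r (X ω) then X ω else 0) ∂μ) ∧
    lam * ∫ ω, max (r (X ω) - (cstar + ε) * X ω) 0 ∂μ - (cstar + ε) ≤ -ε := by
  set f : Ω → ℝ := fun ω => max (r (X ω) - (cstar + ε) * X ω) 0 with hf
  set g : Ω → ℝ := fun ω => max (r (X ω) - cstar * X ω) 0 with hg
  set q : Ω → ℝ := fun ω => if (cstar + ε) * X ω ≤ r (X ω) then X ω else 0 with hq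
  have hqle : ∀ᵐ ω ∂μ, f ω + ε * q ω ≤ g ω := by
    filter_upwards [hX] with ω hω
    obtain ⟨hx0, -⟩ := hω
    simp only [hf, hg, hq]
    by_cases h : (cstar + ε) * X ω ≤ r (X ω)
    · rw [if_pos h, max_eq_left (by linarith : (0:ℝ) ≤ r (X ω) - (cstar + ε) * X ω)]
      refine le_max_of_le_left ?_
      nlinarith
    · rw [if_neg h, mul_zero, add_zero]
      have : r (X ω) - (cstar + ε) * X ω ≤ r (X ω) - cstar * X ω := by nlinarith
      exact max_le_max this le_rfl
  have hq0 : 0 ≤ ∫ ω, q ω ∂μ := by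
    apply integral_nonneg_of_ae
    filter_upwards [hX] with ω hω
    simp only [hq]
    split <;> [exact hω.1; exact le_rfl]
  have hI : (∫ ω, f ω ∂μ) + ε * ∫ ω, q ω ∂μ ≤ ∫ ω, g ω ∂μ := by
    rw [← integral_const_mul, ← integral_add (hint _) (hintq.const_mul ε)]
    exact integral_mono_ae ((hint _).add (hintq.const_mul ε)) (hint _) hqle
  have key := mul_le_mul_of_nonneg_left hI hlam.le
  have hroot' : lam * (∫ ω, g ω ∂μ) - cstar = 0 := hroot
  constructor
  · show lam * (∫ ω, f ω ∂μ) - (cstar + ε) ≤ -ε * (1 + lam * ∫ ω, q ω ∂μ)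
    nlinarith
  · show lam * (∫ ω, f ω ∂μ) - (cstar + ε) ≤ -ε
    nlinarith [mul_nonneg (mul_nonneg hlam.le hε.le) hq0]
end

section
/- Let Z be a Poisson random variable with parameter μ > 0. Then E[(Z − 2μ)₊] ≤ 4. -/
open MeasureTheory ProbabilityTheory Real
open scoped NNReal

lemma summable_aux (p : ℝ≥0) :
    Summable (fun n : ℕ => poissonPMFReal p n * rexp ((n : ℝ) - 2 * p)) := by
  have h : (fun n : ℕ => poissonPMFReal p n * rexp ((n : ℝ) - 2 * p)) =
      fun n : ℕ => rexp (-(p : ℝ)) * rexp (-(2 * p)) * ((rexp 1 * p) ^ n / n.factorial) := by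
    funext n
    have h1 : rexp ((n : ℝ) - 2 * p) = rexp (n : ℝ) * rexp (-(2 * (p : ℝ))) := by
      rw [← Real.exp_add]; ring_nf
    have h2 : rexp ((n : ℝ)) = (rexp 1) ^ n := by
      rw [← Real.exp_nat_mul]; simp
    simp only [poissonPMFReal, h1, h2, mul_pow]
    ring
  rw [h]
  exact (Real.summable_pow_div_factorial _).mul_left _

lemma integrable_exp_aux (p : ℝ≥0) :
    Integrable (fun n : ℕ => rexp ((n : ℝ) - 2 * p)) (poissonMeasure p) := by
  constructor
  · exact Measurable.aestronglyMeasurable (by fun_prop)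
  · rw [HasFiniteIntegral, MeasureTheory.lintegral_countable']
    have heq : ∀ n : ℕ, ‖rexp ((n : ℝ) - 2 * p)‖₊ * (poissonMeasure p) {n} =
        ENNReal.ofReal (poissonPMFReal p n * rexp ((n : ℝ) - 2 * p)) := by
      intro n
      rw [poissonMeasure_singleton]
      rw [ENNReal.ofReal_mul poissonPMFReal_nonneg]
      rw [show ENNReal.ofReal (poissonPMFReal p n) = ENNReal.ofReal (rexp (-p) * p ^ n / n.factorial) from rfl]
      rw [mul_comm]
      rw [← enorm_eq_nnnorm, ← ofReal_norm, Real.norm_eq_abs, abs_of_nonneg (Real.exp_nonneg _)]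
    simp_rw [enorm_eq_nnnorm, heq]
    rw [← ENNReal.ofReal_tsum_of_nonneg
      (fun n => mul_nonneg poissonPMFReal_nonneg (Real.exp_nonneg _)) (summable_aux p)]
    exact ENNReal.ofReal_lt_top

/-- if `Z ~ Poisson(μ)` then `E[(Z − 2μ)₊] ≤ 4`. -/
theorem stmt6 (p : ℝ≥0) (hp : 0 < p) :
    ∫ n : ℕ, max ((n : ℝ) - 2 * p) 0 ∂(poissonMeasure p) ≤ 4 := by
  have hbound : ∀ n : ℕ, max ((n : ℝ) - 2 * p) 0 ≤ rexp ((n : ℝ) - 2 * p) := by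
    intro n
    rcases le_total ((n : ℝ) - 2 * p) 0 with h | h
    · rw [max_eq_right h]; positivity
    · rw [max_eq_left h]
      exact le_trans (by linarith) (Real.add_one_le_exp _)
  have hint : Integrable (fun n : ℕ => max ((n : ℝ) - 2 * p) 0) (poissonMeasure p) := by
    refine (integrable_exp_aux p).mono (Measurable.aestronglyMeasurable (by fun_prop)) ?_
    refine Filter.Eventually.of_forall fun n => ?_
    rw [Real.norm_eq_abs, Real.norm_eq_abs, abs_of_nonneg (le_max_right _ _),
      abs_of_nonneg (Real.exp_nonneg _)]
    exact hbound n
  refine le_trans (integral_mono hint (integrable_exp_aux p)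
    (fun n => hbound n)) ?_
  rw [integral_poissonMeasure' (integrable_exp_aux p)]
  have hpt : ∀ n : ℕ, (rexp (-p) * p ^ n / n.factorial) • rexp ((n : ℝ) - 2 * p) =
      poissonPMFReal p n * rexp ((n : ℝ) - 2 * p) := by
    intro n
    rw [smul_eq_mul]
    rfl
  simp_rw [hpt]
  -- sum equals exp ((e - 3) * p)
  have hsum : ∑' n : ℕ, poissonPMFReal p n * rexp ((n : ℝ) - 2 * p) =
      rexp ((rexp 1 - 3) * p) := by
    have h : (fun n : ℕ => poissonPMFReal p n * rexp ((n : ℝ) - 2 * p)) =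
        fun n : ℕ => rexp (-(3 * p)) * ((rexp 1 * p) ^ n / n.factorial) := by
      funext n
      have h1 : rexp ((n : ℝ) - 2 * p) = rexp (n : ℝ) * rexp (-(2 * (p : ℝ))) := by
        rw [← Real.exp_add]; ring_nf
      have h2 : rexp ((n : ℝ)) = (rexp 1) ^ n := by
        rw [← Real.exp_nat_mul]; simp
      have h3 : rexp (-(3 * (p : ℝ))) = rexp (-(p : ℝ)) * rexp (-(2 * (p : ℝ))) := by
        rw [← Real.exp_add]; ring_nf
      simp only [poissonPMFReal, h1, h2, h3, mul_pow]
      ring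
    have hts : ∑' n : ℕ, (rexp 1 * (p : ℝ)) ^ n / n.factorial = rexp (rexp 1 * p) := by
      rw [(NormedSpace.expSeries_div_hasSum_exp (rexp 1 * (p : ℝ))).tsum_eq,
        Real.exp_eq_exp_ℝ]
    rw [h, tsum_mul_left, hts, ← Real.exp_add]
    congr 1
    ring
  rw [hsum]
  have : rexp ((rexp 1 - 3) * p) ≤ 1 := by
    rw [Real.exp_le_one_iff]
    have he : rexp 1 - 3 < 0 := by
      have := Real.exp_one_lt_d9
      linarith
    nlinarith [hp.le, (NNReal.coe_pos.mpr hp)]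
  linarith
end

section
/- For any acceptance set A ⊆ [0,C] (measurable), the per-time reward γ_A = λ·E[r(X)·1(X ∈ A)] / (1 + λ·E[X·1(X ∈ A)]) satisfies γ_A ≤ c*, where c* is the unique root of Φ(c) = λE[(r(X) − cX)₊] − c. Moreover γ_A = c* if A ⊇ {x : r(x) > c*x} and A ∩ {x : r(x) < c*x} = ∅ (up to P_X-null sets). -/
open MeasureTheory Set
open scoped Classical

/-- for any measurable acceptance set `A`, the per-time reward `γ_A` is at
most `c*`, with equality when `A` contains the strictly profitable durations and avoids
the strictly sub-profitable ones (up to null sets). -/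
theorem stmt14 {Ω : Type*} [MeasurableSpace Ω] (μ : Measure Ω) [IsProbabilityMeasure μ]
    (X : Ω → ℝ) (r : ℝ → ℝ) (C D E lam cstar : ℝ) (A : Set ℝ)
    (hXmeas : Measurable X)
    (hX : ∀ᵐ ω ∂μ, 0 ≤ X ω ∧ X ω ≤ C)
    (hrmeas : Measurable r)
    (hr : ∀ x, E ≤ r x ∧ r x ≤ D) (hlam : 0 < lam)
    (hA : MeasurableSet A)
    (hint : Integrable (fun ω => max (r (X ω) - cstar * X ω) 0) μ)
    (hint1 : Integrable (fun ω => if X ω ∈ A then r (X ω) else 0) μ)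
    (hint2 : Integrable (fun ω => if X ω ∈ A then X ω else 0) μ)
    (hcstar0 : 0 ≤ cstar)
    (hroot : lam * ∫ ω, max (r (X ω) - cstar * X ω) 0 ∂μ = cstar) :
    (lam * (∫ ω, (if X ω ∈ A then r (X ω) else 0) ∂μ)
      / (1 + lam * ∫ ω, (if X ω ∈ A then X ω else 0) ∂μ) ≤ cstar) ∧
    (((∀ᵐ ω ∂μ, cstar * X ω < r (X ω) → X ω ∈ A) ∧
      (∀ᵐ ω ∂μ, X ω ∈ A → cstar * X ω ≤ r (X ω))) →
      lam * (∫ ω, (if X ω ∈ A then r (X ω) else 0) ∂μ)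
        / (1 + lam * ∫ ω, (if X ω ∈ A then X ω else 0) ∂μ) = cstar) := by
  set Ir := ∫ ω, (if X ω ∈ A then r (X ω) else 0) ∂μ with hIr
  set Ix := ∫ ω, (if X ω ∈ A then X ω else 0) ∂μ with hIx
  set M := ∫ ω, max (r (X ω) - cstar * X ω) 0 ∂μ with hM
  have hIx0 : 0 ≤ Ix := by
    apply integral_nonneg_of_ae
    filter_upwards [hX] with ω hω
    by_cases h : X ω ∈ A <;> simp [h, hω.1]
  have hden : (0:ℝ) < 1 + lam * Ix := by positivity
  have hsub : Integrable (fun ω => (if X ω ∈ A then r (X ω) else 0)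
      - cstar * (if X ω ∈ A then X ω else 0)) μ := hint1.sub (hint2.const_mul cstar)
  have hintsub : ∫ ω, ((if X ω ∈ A then r (X ω) else 0)
      - cstar * (if X ω ∈ A then X ω else 0)) ∂μ = Ir - cstar * Ix := by
    rw [integral_sub hint1 (hint2.const_mul cstar), integral_const_mul]
  constructor
  · rw [div_le_iff₀ hden]
    have hle : Ir - cstar * Ix ≤ M := by
      rw [← hintsub]
      apply integral_mono_ae hsub hint
      filter_upwards with ω
      by_cases h : X ω ∈ A <;> simp [h, le_max_iff, le_refl]
    nlinarith
  · rintro ⟨h1, h2⟩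
    rw [div_eq_iff (ne_of_gt hden)]
    have heq : Ir - cstar * Ix = M := by
      rw [← hintsub]
      apply integral_congr_ae
      filter_upwards [h1, h2] with ω h1 h2
      by_cases h : X ω ∈ A
      · simp only [h, if_true]
        rw [max_eq_left (by linarith [h2 h])]
      · simp only [h, if_false]
        rw [max_eq_right]
        · ring
        · by_contra hc
          exact h (h1 (by linarith))
    nlinarith
end

section
/- Let cₙ ≥ c* ≥ 0 and consider the acceptance rule 1(r(X) ≥ cₙX). Then the per-time reward γₙ = λE[r(X)·1(r(X) ≥ cₙX)] / (1 + λE[X·1(r(X) ≥ cₙX)]) satisfies (c* − γₙ)·(E[X·1(r(X) ≥ cₙX)] + 1/λ) ≤ C·(cₙ − c*)₊. More generally, for random cₙ independent of the current X, (c* − γₙ)·E[X·1(r(X) ≥ cₙX) + S] ≤ C·E[(cₙ − c*)₊] where S ~ Exp(λ) independent of X. -/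
open MeasureTheory ProbabilityTheory Set

lemma exp_mean {l : ℝ} (hl : 0 < l) :
    ∫ x, x ∂(ProbabilityTheory.expMeasure l) = 1 / l := by
  have hmeas : Measurable fun x => (ProbabilityTheory.gammaPDFReal 1 l x).toNNReal :=
    (ProbabilityTheory.measurable_gammaPDFReal 1 l).real_toNNReal
  have h0 : ProbabilityTheory.expMeasure l
      = volume.withDensity
        (fun x => ((ProbabilityTheory.gammaPDFReal 1 l x).toNNReal : ENNReal)) := rfl
  rw [h0, integral_withDensity_eq_integral_smul hmeas]
  have h1 : (fun x : ℝ => ((ProbabilityTheory.gammaPDFReal 1 l x).toNNReal : NNReal) • x)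
      = fun x => ProbabilityTheory.gammaPDFReal 1 l x * x := by
    funext x
    rw [NNReal.smul_def, smul_eq_mul,
      Real.coe_toNNReal _ (ProbabilityTheory.gammaPDFReal_nonneg one_pos hl x)]
  rw [h1, ← setIntegral_eq_integral_of_forall_compl_eq_zero (s := Ioi (0:ℝ))
    (fun x hx => by
      rcases lt_or_eq_of_le (not_lt.mp (fun h => hx (mem_Ioi.mpr h))) with h | h
      · simp [ProbabilityTheory.gammaPDFReal, not_le.mpr h]
      · simp [h])]
  rw [setIntegral_congr_fun measurableSet_Ioi
    (g := fun x => l * (x ^ ((2:ℝ) - 1) * Real.exp (-(l * x))))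
    (fun x hx => by
      have hx0 : (0:ℝ) ≤ x := le_of_lt hx
      simp only [ProbabilityTheory.gammaPDFReal, if_pos hx0, Real.Gamma_one, Real.rpow_one,
        sub_self, Real.rpow_zero, div_one, mul_one]
      norm_num [Real.rpow_one]
      ring)]
  rw [integral_const_mul, Real.integral_rpow_mul_exp_neg_mul_Ioi (by norm_num : (0:ℝ) < 2) hl]
  have hg2 : Real.Gamma 2 = 1 := by
    rw [show (2:ℝ) = (1:ℝ) + 1 by norm_num, Real.Gamma_add_one one_ne_zero, Real.Gamma_one]
    ring
  rw [hg2, show ((2:ℝ)) = ((2:ℕ):ℝ) by norm_num, Real.rpow_natCast]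
  field_simp

lemma stmt15_ptwise {x cv rv C cstar : ℝ} (hx0 : 0 ≤ x) (hxC : x ≤ C) (hc : cstar ≤ cv)
    (hcs : 0 ≤ cstar) :
    max (rv - cstar * x) 0 + cstar * (if cv * x ≤ rv then x else 0)
      - (if cv * x ≤ rv then rv else 0) ≤ C * max (cv - cstar) 0 := by
  have hC0 : 0 ≤ C := le_trans hx0 hxC
  have hmaxc : max (cv - cstar) 0 = cv - cstar := max_eq_left (sub_nonneg.2 hc)
  by_cases hif : cv * x ≤ rv
  · simp only [if_pos hif]
    have h1 : cstar * x ≤ cv * x := mul_le_mul_of_nonneg_right hc hx0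
    rw [max_eq_left (by linarith), hmaxc]
    nlinarith
  · simp only [if_neg hif]
    push_neg at hif
    rw [hmaxc]
    rcases le_total (rv - cstar * x) 0 with h | h
    · rw [max_eq_right h]
      nlinarith
    · rw [max_eq_left h]
      nlinarith [mul_le_mul_of_nonneg_left hxC (sub_nonneg.2 hc)]

lemma stmt15_key {Ω : Type*} [MeasurableSpace Ω] (μ : Measure Ω) [IsProbabilityMeasure μ]
    (X c : Ω → ℝ) (r : ℝ → ℝ) {C cstar : ℝ} (hcs : 0 ≤ cstar)
    (hX : ∀ᵐ ω ∂μ, 0 ≤ X ω ∧ X ω ≤ C)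
    (hc : ∀ᵐ ω ∂μ, cstar ≤ c ω)
    (hintmax : Integrable (fun ω => max (r (X ω) - cstar * X ω) 0) μ)
    (hintr : Integrable (fun ω => if c ω * X ω ≤ r (X ω) then r (X ω) else 0) μ)
    (hintx : Integrable (fun ω => if c ω * X ω ≤ r (X ω) then X ω else 0) μ)
    (hintc : Integrable (fun ω => max (c ω - cstar) 0) μ) :
    (∫ ω, max (r (X ω) - cstar * X ω) 0 ∂μ)
      + cstar * (∫ ω, (if c ω * X ω ≤ r (X ω) then X ω else 0) ∂μ)
      - (∫ ω, (if c ω * X ω ≤ r (X ω) then r (X ω) else 0) ∂μ)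
    ≤ C * ∫ ω, max (c ω - cstar) 0 ∂μ := by
  have hsum : ∫ ω, (max (r (X ω) - cstar * X ω) 0
        + cstar * (if c ω * X ω ≤ r (X ω) then X ω else 0)
        - (if c ω * X ω ≤ r (X ω) then r (X ω) else 0)) ∂μ
      = (∫ ω, max (r (X ω) - cstar * X ω) 0 ∂μ)
        + cstar * (∫ ω, (if c ω * X ω ≤ r (X ω) then X ω else 0) ∂μ)
        - (∫ ω, (if c ω * X ω ≤ r (X ω) then r (X ω) else 0) ∂μ) := by
    have hadd : Integrable (fun ω => max (r (X ω) - cstar * X ω) 0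
        + cstar * (if c ω * X ω ≤ r (X ω) then X ω else 0)) μ :=
      hintmax.add (hintx.const_mul cstar)
    rw [integral_sub hadd hintr, integral_add hintmax (hintx.const_mul cstar),
      integral_const_mul]
  rw [← hsum, ← integral_const_mul C]
  refine integral_mono_ae ((hintmax.add (hintx.const_mul cstar)).sub hintr)
    (hintc.const_mul C) ?_
  filter_upwards [hX, hc] with ω hXω hcω
  exact stmt15_ptwise hXω.1 hXω.2 hcω hcs

lemma stmt15_alg {lam cstar M R T K C : ℝ} (hlam : 0 < lam) (hT : 0 ≤ T)
    (hroot : lam * M = cstar) (hkey : M + cstar * T - R ≤ C * K) :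
    (cstar - lam * R / (1 + lam * T)) * (T + 1 / lam) ≤ C * K := by
  have hden : 0 < 1 + lam * T := by positivity
  have heq : (cstar - lam * R / (1 + lam * T)) * (T + 1 / lam) = M + cstar * T - R := by
    rw [← hroot]
    field_simp
    ring
  linarith [heq ▸ hkey]

/-- the per-time reward of the plug-in policy with threshold `cₙ ≥ c*` is at
most `C·(cₙ − c*)₊` below `c*` (after renormalization by the expected time per task),
both for a deterministic threshold and for a random threshold independent of `X`. -/
theorem stmt15 {Ω : Type*} [MeasurableSpace Ω] (μ : Measure Ω) [IsProbabilityMeasure μ]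
    (X S cn : Ω → ℝ) (r : ℝ → ℝ) (C D E lam cstar : ℝ)
    (hXmeas : Measurable X) (hSmeas : Measurable S) (hcnmeas : Measurable cn)
    (hX : ∀ᵐ ω ∂μ, 0 ≤ X ω ∧ X ω ≤ C)
    (hrmeas : Measurable r)
    (hr : ∀ x, E ≤ r x ∧ r x ≤ D) (hlam : 0 < lam) (hC : 0 < C)
    (hcstar0 : 0 ≤ cstar)
    (hroot : lam * ∫ ω, max (r (X ω) - cstar * X ω) 0 ∂μ = cstar)
    (hintmax : ∀ c : ℝ, Integrable (fun ω => max (r (X ω) - c * X ω) 0) μ)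
    (hintr : ∀ c : ℝ, Integrable (fun ω => if c * X ω ≤ r (X ω) then r (X ω) else 0) μ)
    (hintx : ∀ c : ℝ, Integrable (fun ω => if c * X ω ≤ r (X ω) then X ω else 0) μ)
    (hintrn : Integrable (fun ω => if cn ω * X ω ≤ r (X ω) then r (X ω) else 0) μ)
    (hintxn : Integrable (fun ω => if cn ω * X ω ≤ r (X ω) then X ω else 0) μ)
    (hintc : Integrable (fun ω => max (cn ω - cstar) 0) μ)
    (hSint : Integrable S μ)
    (hSdist : Measure.map S μ = expMeasure lam)
    (hScn : IndepFun S X μ)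
    (hcnX : IndepFun cn X μ)
    (hcn : ∀ᵐ ω ∂μ, cstar ≤ cn ω) :
    (∀ c : ℝ, cstar ≤ c →
      (cstar - lam * (∫ ω, (if c * X ω ≤ r (X ω) then r (X ω) else 0) ∂μ)
          / (1 + lam * ∫ ω, (if c * X ω ≤ r (X ω) then X ω else 0) ∂μ))
        * ((∫ ω, (if c * X ω ≤ r (X ω) then X ω else 0) ∂μ) + 1 / lam)
      ≤ C * max (c - cstar) 0) ∧
    (cstar - lam * (∫ ω, (if cn ω * X ω ≤ r (X ω) then r (X ω) else 0) ∂μ)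
        / (1 + lam * ∫ ω, (if cn ω * X ω ≤ r (X ω) then X ω else 0) ∂μ))
      * (∫ ω, ((if cn ω * X ω ≤ r (X ω) then X ω else 0) + S ω) ∂μ)
    ≤ C * ∫ ω, max (cn ω - cstar) 0 ∂μ := by
  have hTnn : ∀ (f : Ω → ℝ), (∀ᵐ ω ∂μ, 0 ≤ (if f ω * X ω ≤ r (X ω) then X ω else 0)) := by
    intro f
    filter_upwards [hX] with ω hω
    split_ifs
    · exact hω.1
    · exact le_refl 0
  have hES : ∫ ω, S ω ∂μ = 1 / lam := by
    have h := integral_map (μ := μ) (φ := S) (f := fun x : ℝ => x) hSmeas.aemeasurable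
      aestronglyMeasurable_id
    rw [hSdist, exp_mean hlam] at h
    exact h.symm
  constructor
  · intro c hc
    have hK : (∫ ω, max (c - cstar) 0 ∂μ) = max (c - cstar) 0 := by
      simp
    refine stmt15_alg hlam (integral_nonneg_of_ae (hTnn (fun _ => c))) hroot ?_
    have := stmt15_key μ X (fun _ => c) r hcstar0 hX (Filter.Eventually.of_forall fun _ => hc)
      (hintmax cstar) (hintr c) (hintx c) (integrable_const _)
    rwa [hK] at this
  · have hfac : (∫ ω, ((if cn ω * X ω ≤ r (X ω) then X ω else 0) + S ω) ∂μ)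
        = (∫ ω, (if cn ω * X ω ≤ r (X ω) then X ω else 0) ∂μ) + 1 / lam := by
      rw [integral_add hintxn hSint, hES]
    rw [hfac]
    exact stmt15_alg hlam (integral_nonneg_of_ae (hTnn cn)) hroot
      (stmt15_key μ X cn r hcstar0 hX hcn (hintmax cstar) hintrn hintxn hintc)
end

section
/- (Sub-optimality of the threshold policy.) Let v : (−∞,T] → ℝ be the unique solution of the ODE v′(t) = −λ·E[(r(X) + v(t+X) − v(t))₊] for t < T with v(t) = 0 for t ≥ T, and let w(t) = c*(T − t) where c* is the unique root of Φ(c) = λE[(r(X) − cX)₊] − c. If 0 ≤ X ≤ C a.s., then w(t) ≤ v(t) ≤ w(t − C) for all t ∈ [0,T]; in particular 0 ≤ v(0) − c*T ≤ c*C. -/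
open MeasureTheory Set
open Filter Topology

lemma key_pos {T C : ℝ} (hC : 0 < C) (η : ℝ → ℝ)
    (hcont : ContinuousOn η (Set.Icc 0 T))
    (hTpos : 0 < η T)
    (hpos : ∀ s ∈ Set.Ioc T (T + C), 0 < η s)
    (hder : ∀ t₀ ∈ Set.Ico (0:ℝ) T, η t₀ ≤ 0 → (∀ s ∈ Set.Ioc t₀ (T + C), 0 < η s) →
      ∃ d, HasDerivAt η d t₀ ∧ d < 0) :
    ∀ t ∈ Set.Icc 0 T, 0 < η t := by
  by_contra h
  push_neg at h
  obtain ⟨t₁, ht₁, ht₁le⟩ := h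
  set S := {t ∈ Set.Icc 0 T | η t ≤ 0} with hS
  have hSne : S.Nonempty := ⟨t₁, ht₁, ht₁le⟩
  have hSclosed : IsClosed S :=
    hcont.preimage_isClosed_of_isClosed isClosed_Icc isClosed_Iic
  have hScomp : IsCompact S :=
    IsCompact.of_isClosed_subset isCompact_Icc hSclosed (fun x hx => hx.1)
  obtain ⟨t₀, ht₀def⟩ : ∃ t₀, t₀ = sSup S := ⟨_, rfl⟩
  have ht₀S : t₀ ∈ S := ht₀def ▸ hScomp.sSup_mem hSne
  have ht₀T : t₀ < T := lt_of_le_of_ne ht₀S.1.2 (by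
    rintro rfl
    exact absurd ht₀S.2 (not_le.mpr hTpos))
  have hafter : ∀ s ∈ Set.Ioc t₀ (T + C), 0 < η s := by
    intro s hs
    by_cases hsT : s ≤ T
    · by_contra hns
      push_neg at hns
      have hmem : s ∈ S := ⟨⟨le_trans ht₀S.1.1 hs.1.le, hsT⟩, hns⟩
      exact absurd (ht₀def ▸ le_csSup hScomp.bddAbove hmem) (not_le.mpr hs.1)
    · exact hpos s ⟨not_le.1 hsT, hs.2⟩
  obtain ⟨d, hd, hdneg⟩ := hder t₀ ⟨ht₀S.1.1, ht₀T⟩ ht₀S.2 hafter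
  have hge : 0 ≤ d := by
    have hten : Tendsto (slope η t₀) (𝓝[>] t₀) (𝓝 d) :=
      (hasDerivAt_iff_tendsto_slope.mp hd).mono_left
        (nhdsWithin_mono _ (fun x hx => ne_of_gt hx))
    refine ge_of_tendsto hten ?_
    filter_upwards [Ioo_mem_nhdsGT_of_mem (Set.mem_Ico.mpr ⟨le_refl t₀, ht₀T⟩)] with s hs
    have h1 : 0 < η s := hafter s ⟨hs.1, by linarith [hs.2]⟩
    rw [slope_def_field]
    apply div_nonneg (by linarith [ht₀S.2]) (by linarith [hs.1])
  linarith

/-- the value function `v` solving the dynamic programming ODE is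
sandwiched between `w(t) = c*(T − t)` and `w(t − C)`; in particular the threshold policy
is `c*C`-suboptimal. -/
theorem stmt19 {Ω : Type*} [MeasurableSpace Ω] (μ : Measure Ω) [IsProbabilityMeasure μ]
    (X : Ω → ℝ) (r : ℝ → ℝ) (C D E lam cstar T : ℝ) (v : ℝ → ℝ)
    (hXmeas : Measurable X)
    (hX : ∀ᵐ ω ∂μ, 0 ≤ X ω ∧ X ω ≤ C)
    (hrmeas : Measurable r)
    (hr : ∀ x, E ≤ r x ∧ r x ≤ D) (hlam : 0 < lam) (hC : 0 < C) (hT : 0 < T)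
    (hcstar0 : 0 ≤ cstar)
    (hroot : lam * ∫ ω, max (r (X ω) - cstar * X ω) 0 ∂μ = cstar)
    (hint : ∀ t : ℝ, Integrable (fun ω => max (r (X ω) + v (t + X ω) - v t) 0) μ)
    (hcont : ContinuousOn v (Set.Iic T))
    (hode : ∀ t : ℝ, t < T →
      HasDerivAt v (-lam * ∫ ω, max (r (X ω) + v (t + X ω) - v t) 0 ∂μ) t)
    (hbound : ∀ t : ℝ, T ≤ t → v t = 0) :
    (∀ t ∈ Set.Icc 0 T, cstar * (T - t) ≤ v t ∧ v t ≤ cstar * (T - (t - C))) ∧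
    0 ≤ v 0 - cstar * T ∧ v 0 - cstar * T ≤ cstar * C := by
  -- integrability of the stationary integrand
  have hBint : Integrable (fun ω => max (r (X ω) - cstar * X ω) 0) μ := by
    refine Integrable.mono' (integrable_const (max D 0))
      (((hrmeas.comp hXmeas).sub ((hXmeas.const_mul cstar))).max measurable_const).aestronglyMeasurable ?_
    filter_upwards [hX] with ω hω
    rw [Real.norm_eq_abs, abs_of_nonneg (le_max_right _ _)]
    refine max_le ?_ (le_max_right _ _)
    have := (hr (X ω)).2
    have : cstar * X ω ≥ 0 := mul_nonneg hcstar0 hω.1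
    calc r (X ω) - cstar * X ω ≤ D := by linarith [(hr (X ω)).2]
      _ ≤ max D 0 := le_max_left _ _
  -- auxiliary linear derivative
  have hlin : ∀ (a : ℝ) (t₀ : ℝ), HasDerivAt (fun t : ℝ => a * (T + C + 1 - t)) (-a) t₀ := by
    intro a t₀
    simpa using ((hasDerivAt_id t₀).const_sub (T + C + 1)).const_mul a
  -- derivative of the truncated lower barrier
  have hwder : ∀ t₀ : ℝ, t₀ < T → HasDerivAt (fun t => cstar * max (T - t) 0) (-cstar) t₀ := by
    intro t₀ ht₀
    have h1 : HasDerivAt (fun t : ℝ => cstar * (T - t)) (-cstar) t₀ := by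
      simpa using ((hasDerivAt_id t₀).const_sub T).const_mul cstar
    refine h1.congr_of_eventuallyEq ?_
    filter_upwards [Iio_mem_nhds ht₀] with x hx
    rw [max_eq_left (by simp only [Set.mem_Iio] at hx; linarith : (0:ℝ) ≤ T - x)]
  -- LOWER BOUND
  have lower : ∀ t ∈ Set.Icc (0:ℝ) T, cstar * (T - t) ≤ v t := by
    intro t ht
    have hK : 0 < T + C + 1 - t := by have := ht.2; linarith
    refine le_of_forall_pos_le_add ?_
    intro δ hδ
    set ε := δ / (T + C + 1 - t) with hεdef
    have hε : 0 < ε := div_pos hδ hK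
    set η := fun s => v s - cstar * max (T - s) 0 + ε * (T + C + 1 - s) with hηdef
    have hmain : ∀ s ∈ Set.Icc (0:ℝ) T, 0 < η s := by
      refine key_pos hC η ?_ ?_ ?_ ?_
      · refine ContinuousOn.add (ContinuousOn.sub (hcont.mono Icc_subset_Iic_self) ?_) ?_
        · exact (continuous_const.mul ((continuous_const.sub continuous_id).max continuous_const)).continuousOn
        · exact (continuous_const.mul (continuous_const.sub continuous_id)).continuousOn
      · simp only [hηdef, hbound T le_rfl, sub_self, max_self, mul_zero, zero_sub, sub_zero, zero_add]
        have : (0:ℝ) < T + C + 1 - T := by linarith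
        positivity
      · intro s hs
        have h0 : v s = 0 := hbound s hs.1.le
        have h1 : max (T - s) 0 = 0 := max_eq_right (by linarith [hs.1])
        simp only [hηdef, h0, h1, mul_zero, sub_zero, zero_sub, zero_add]
        have : (0:ℝ) < T + C + 1 - s := by linarith [hs.2]
        positivity
      · intro t₀ ht₀ hη0 hafter
        refine ⟨(-lam * ∫ ω, max (r (X ω) + v (t₀ + X ω) - v t₀) 0 ∂μ) + cstar - ε, ?_, ?_⟩
        · have := ((hode t₀ ht₀.2).sub (hwder t₀ ht₀.2)).add (hlin ε t₀)
          exact this.congr_deriv (by ring)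
        · have hAB : ∀ᵐ ω ∂μ, max (r (X ω) - cstar * X ω) 0
              ≤ max (r (X ω) + v (t₀ + X ω) - v t₀) 0 := by
            filter_upwards [hX] with ω hω
            rcases eq_or_lt_of_le hω.1 with h0 | h0
            · rw [← h0]
              simp
            · have hsmem : t₀ + X ω ∈ Set.Ioc t₀ (T + C) :=
                ⟨by linarith, by linarith [ht₀.2, hω.2]⟩
              have h1 := hafter _ hsmem
              simp only [hηdef] at h1 hη0
              have hmax1 : max (T - t₀) 0 = T - t₀ := max_eq_left (by linarith [ht₀.2])
              rw [hmax1] at hη0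
              have hmax2 : cstar * (T - (t₀ + X ω)) ≤ cstar * max (T - (t₀ + X ω)) 0 :=
                mul_le_mul_of_nonneg_left (le_max_left _ _) hcstar0
              have hεX : 0 ≤ ε * X ω := mul_nonneg hε.le hω.1
              refine max_le_max ?_ le_rfl
              nlinarith
          have hmono := integral_mono_ae hBint (hint t₀) hAB
          have : cstar ≤ lam * ∫ ω, max (r (X ω) + v (t₀ + X ω) - v t₀) 0 ∂μ := by
            rw [← hroot]
            exact mul_le_mul_of_nonneg_left hmono hlam.le
          linarith
    have := hmain t ht
    simp only [hηdef] at this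
    rw [max_eq_left (by linarith [ht.2] : (0:ℝ) ≤ T - t)] at this
    have hεK : ε * (T + C + 1 - t) = δ := div_mul_cancel₀ δ (ne_of_gt hK)
    linarith
  -- UPPER BOUND
  have upper : ∀ t ∈ Set.Icc (0:ℝ) T, v t ≤ cstar * (T + C - t) := by
    intro t ht
    have hK : 0 < T + C + 1 - t := by have := ht.2; linarith
    refine le_of_forall_pos_le_add ?_
    intro δ hδ
    set ε := δ / (T + C + 1 - t) with hεdef
    have hε : 0 < ε := div_pos hδ hK
    set η := fun s => cstar * (T + C - s) - v s + ε * (T + C + 1 - s) with hηdef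
    have hmain : ∀ s ∈ Set.Icc (0:ℝ) T, 0 < η s := by
      refine key_pos hC η ?_ ?_ ?_ ?_
      · refine ContinuousOn.add (ContinuousOn.sub ?_ (hcont.mono Icc_subset_Iic_self)) ?_
        · exact (continuous_const.mul (continuous_const.sub continuous_id)).continuousOn
        · exact (continuous_const.mul (continuous_const.sub continuous_id)).continuousOn
      · simp only [hηdef, hbound T le_rfl, sub_zero]
        have h1 : 0 ≤ cstar * (T + C - T) := mul_nonneg hcstar0 (by linarith)
        have h2 : 0 < ε * (T + C + 1 - T) := mul_pos hε (by linarith)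
        linarith
      · intro s hs
        have h0 : v s = 0 := hbound s hs.1.le
        simp only [hηdef, h0, sub_zero]
        have h1 : 0 ≤ cstar * (T + C - s) := mul_nonneg hcstar0 (by linarith [hs.2])
        have h2 : 0 < ε * (T + C + 1 - s) := mul_pos hε (by linarith [hs.2])
        linarith
      · intro t₀ ht₀ hη0 hafter
        refine ⟨-cstar - (-lam * ∫ ω, max (r (X ω) + v (t₀ + X ω) - v t₀) 0 ∂μ) - ε, ?_, ?_⟩
        · have h1 : HasDerivAt (fun t : ℝ => cstar * (T + C - t)) (-cstar) t₀ := by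
            simpa using ((hasDerivAt_id t₀).const_sub (T + C)).const_mul cstar
          have := (h1.sub (hode t₀ ht₀.2)).add (hlin ε t₀)
          exact this.congr_deriv (by ring)
        · have hAB : ∀ᵐ ω ∂μ, max (r (X ω) + v (t₀ + X ω) - v t₀) 0
              ≤ max (r (X ω) - cstar * X ω) 0 := by
            filter_upwards [hX] with ω hω
            rcases eq_or_lt_of_le hω.1 with h0 | h0
            · rw [← h0]
              simp
            · have hsmem : t₀ + X ω ∈ Set.Ioc t₀ (T + C) :=
                ⟨by linarith, by linarith [ht₀.2, hω.2]⟩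
              have h1 := hafter _ hsmem
              simp only [hηdef] at h1 hη0
              have hεX : 0 ≤ ε * X ω := mul_nonneg hε.le hω.1
              refine max_le_max ?_ le_rfl
              nlinarith
          have hmono := integral_mono_ae (hint t₀) hBint hAB
          have : lam * (∫ ω, max (r (X ω) + v (t₀ + X ω) - v t₀) 0 ∂μ) ≤ cstar := by
            rw [← hroot]
            exact mul_le_mul_of_nonneg_left hmono hlam.le
          linarith
    have := hmain t ht
    simp only [hηdef] at this
    have hεK : ε * (T + C + 1 - t) = δ := div_mul_cancel₀ δ (ne_of_gt hK)
    linarith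
  refine ⟨fun t ht => ⟨lower t ht, by have := upper t ht; linarith [this]⟩, ?_, ?_⟩
  · have := lower 0 ⟨le_rfl, hT.le⟩
    linarith
  · have := upper 0 ⟨le_rfl, hT.le⟩
    linarith
end
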